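/- Fix \beta \in \mathbb{R}, \beta \ne 0, and for each n let q = e^{-\beta/n} and [n]_q! = \prod_{k=1}^n (1-q^k)/(1-q). Then ln([n]_q!/n!) - n A(\beta) - B(\beta) \to 0 as n \to \infty, where A(\beta) = \int_0^1 ln((1-e^{-\beta y})/(\beta y)) dy and B(\beta) = \beta/2 + (1/2) ln((1-e^{-\beta})/\beta). -/

import Mathlib

open Finset Filter Real

section aux
open intervalIntegral MeasureTheory Metric


noncomputable def gg (x : ℝ) : ℝ := ∫ t in (0:ℝ)..1, Real.exp (-x * t)
noncomputable def gg' (x : ℝ) : ℝ := ∫ t in (0:ℝ)..1, -t * Real.exp (-x * t)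

lemma gg_cont : Continuous gg := by
  apply continuous_parametric_intervalIntegral_of_continuous' (f := fun x t => Real.exp (-x*t))
  fun_prop

lemma gg'_cont : Continuous gg' := by
  apply continuous_parametric_intervalIntegral_of_continuous' (f := fun x t => -t * Real.exp (-x*t))
  fun_prop

lemma gg_pos (x : ℝ) : 0 < gg x := by
  apply intervalIntegral.intervalIntegral_pos_of_pos_on
  · exact (Continuous.intervalIntegrable (by fun_prop) _ _)
  · intro t _; positivity
  · norm_num

lemma gg_zero : gg 0 = 1 := by simp [gg]

lemma gg'_zero : gg' 0 = -(1/2) := by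
  simp only [gg', neg_zero, zero_mul, neg_mul, Real.exp_zero, mul_one]
  rw [intervalIntegral.integral_neg, integral_id]; norm_num

lemma hasDerivAt_gg (x : ℝ) : HasDerivAt gg (gg' x) x := by
  have h := intervalIntegral.hasDerivAt_integral_of_dominated_loc_of_deriv_le
    (F := fun x t => Real.exp (-x * t)) (F' := fun x t => -t * Real.exp (-x * t))
    (x₀ := x) (a := 0) (b := 1) (bound := fun _ => Real.exp (|x| + 1)) (μ := volume)
    (Metric.ball_mem_nhds x one_pos) ?_ ?_ ?_ ?_ ?_ ?_
  · exact h.2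
  · filter_upwards with y
    exact (Continuous.aestronglyMeasurable (by fun_prop)).restrict
  · exact (Continuous.intervalIntegrable (by fun_prop) _ _)
  · exact (Continuous.aestronglyMeasurable (by fun_prop)).restrict
  · filter_upwards with t ht y hy
    rw [Set.uIoc_of_le (by norm_num)] at ht
    obtain ⟨ht0, ht1⟩ := ht
    rw [mem_ball, Real.dist_eq] at hy
    have h1 : |(-t * Real.exp (-y * t))| = t * Real.exp (-y*t) := by
      rw [abs_mul, abs_neg, abs_of_nonneg ht0.le, abs_of_pos (Real.exp_pos _)]
    rw [Real.norm_eq_abs, h1]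
    have : -y * t ≤ |x| + 1 := by
      have : |y| ≤ |x| + 1 := by
        have := abs_sub_abs_le_abs_sub y x; linarith
      nlinarith [abs_nonneg y, neg_abs_le y, le_abs_self y]
    calc t * Real.exp (-y*t) ≤ 1 * Real.exp (|x|+1) := by
          apply mul_le_mul ht1 (Real.exp_le_exp.2 this) (Real.exp_pos _).le zero_le_one
      _ = _ := one_mul _
  · exact intervalIntegrable_const
  · filter_upwards with t ht y hy
    have : HasDerivAt (fun y : ℝ => Real.exp (-y * t)) (Real.exp (-y*t) * (-t)) y := by
      have : HasDerivAt (fun y : ℝ => -y * t) (-t) y := by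
        simpa using (hasDerivAt_id y).neg.mul_const t
      exact (Real.hasDerivAt_exp _).comp y this
    simpa [mul_comm] using this

lemma gg_eq {x : ℝ} (hx : x ≠ 0) : gg x = (1 - Real.exp (-x)) / x := by
  have key : ∀ t ∈ Set.uIcc (0:ℝ) 1, HasDerivAt (fun t => -(1/x) * Real.exp (-x * t))
      (Real.exp (-x * t)) t := by
    intro t _
    have h1 : HasDerivAt (fun t : ℝ => -x * t) (-x) t := by
      simpa using (hasDerivAt_id t).const_mul (-x)
    have := ((Real.hasDerivAt_exp _).comp t h1).const_mul (-(1/x))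
    refine this.congr_deriv ?_
    field_simp
  rw [gg, intervalIntegral.integral_eq_sub_of_hasDerivAt key
    (Continuous.intervalIntegrable (by fun_prop) _ _)]
  field_simp
  simp only [mul_zero, neg_zero, Real.exp_zero]
  ring

section riem
variable (F φ : ℝ → ℝ) (hF : ∀ y, HasDerivAt F (φ y) y) (hφ : Continuous φ)
include hF hφ

lemma parts (a b : ℝ) : ∫ t in a..b, (F b - F t) = ∫ t in a..b, (t - a) * φ t := by
  have hFc : Continuous F := by
    rw [continuous_iff_continuousAt]; exact fun y => (hF y).continuousAt
  have key : ∀ t ∈ Set.uIcc a b, HasDerivAt (fun t => (t - a) * (F b - F t))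
      ((F b - F t) - (t - a) * φ t) t := by
    intro t _
    have h1 : HasDerivAt (fun t : ℝ => t - a) 1 t := (hasDerivAt_id t).sub_const a
    have h2 : HasDerivAt (fun t : ℝ => F b - F t) (-φ t) t := (hF t).const_sub (F b)
    have := h1.mul h2
    refine this.congr_deriv ?_; ring
  have h0 : (∫ t in a..b, ((F b - F t) - (t - a) * φ t)) = 0 := by
    rw [intervalIntegral.integral_eq_sub_of_hasDerivAt key
      (Continuous.intervalIntegrable (by continuity) _ _)]
    simp
  rw [intervalIntegral.integral_sub (Continuous.intervalIntegrable (by continuity) _ _)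
    (Continuous.intervalIntegrable (by continuity) _ _)] at h0
  linarith

lemma term_eq {n : ℕ} (hn : 0 < n) (a : ℝ) :
    F (a + 1/n) - n * (∫ t in a..(a + 1/n), F t) - (F (a + 1/n) - F a)/2
      = ∫ t in a..(a + 1/n), ((n:ℝ)*(t-a) - 1/2) * (φ t - φ a) := by
  have hFc : Continuous F := by
    rw [continuous_iff_continuousAt]; exact fun y => (hF y).continuousAt
  have hn' : (n:ℝ) ≠ 0 := Nat.cast_ne_zero.2 hn.ne'
  set b := a + 1/(n:ℝ) with hb
  -- step 1 : F b - n * ∫ F = ∫ n*(t-a)*φ t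
  have h1 : F b - n * (∫ t in a..b, F t) = ∫ t in a..b, (n:ℝ)*((t-a) * φ t) := by
    rw [intervalIntegral.integral_const_mul, ← parts F φ hF hφ a b,
      intervalIntegral.integral_sub intervalIntegrable_const
        (Continuous.intervalIntegrable (by continuity) _ _)]
    rw [intervalIntegral.integral_const]
    have : b - a = 1/n := by rw [hb]; ring
    rw [this, smul_eq_mul]
    field_simp
  -- step 2 : F b - F a = ∫ φ
  have h2 : F b - F a = ∫ t in a..b, φ t := by
    rw [intervalIntegral.integral_eq_sub_of_hasDerivAt (fun t _ => hF t)
      (Continuous.intervalIntegrable (by continuity) _ _)]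
  -- step 3 : ∫ (n(t-a) - 1/2) = 0
  have h3 : (∫ t in a..b, ((n:ℝ)*(t-a) - 1/2)) = 0 := by
    have : (∫ t in a..b, ((n:ℝ)*(t-a) - 1/2))
        = (∫ t in a..b, ((n:ℝ)*t - ((n:ℝ)*a + 1/2))) := by
      congr 1; ext t; ring
    rw [this, intervalIntegral.integral_sub
      ((Continuous.intervalIntegrable (by continuity) _ _))
      intervalIntegrable_const, intervalIntegral.integral_const_mul, integral_id,
      intervalIntegral.integral_const]
    rw [hb, smul_eq_mul]; field_simp; ring
  rw [h1, h2]
  have hsplit : (∫ t in a..b, ((n:ℝ)*(t-a) - 1/2) * (φ t - φ a))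
      = (∫ t in a..b, (((n:ℝ)*(t-a) - 1/2) * φ t))
        - φ a * (∫ t in a..b, ((n:ℝ)*(t-a) - 1/2)) := by
    rw [← intervalIntegral.integral_const_mul]
    rw [← intervalIntegral.integral_sub (Continuous.intervalIntegrable (by continuity) _ _)
      (Continuous.intervalIntegrable (by continuity) _ _)]
    congr 1; ext t; ring
  rw [hsplit, h3, mul_zero, sub_zero]
  have hfin : (∫ t in a..b, ((n:ℝ)*(t-a) - 1/2) * φ t)
      = (∫ t in a..b, (n:ℝ)*((t-a) * φ t)) - (∫ t in a..b, (1/2 : ℝ) * φ t) := by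
    rw [← intervalIntegral.integral_sub (Continuous.intervalIntegrable (by continuity) _ _)
      (Continuous.intervalIntegrable (by continuity) _ _)]
    congr 1; ext t; ring
  simp only [hfin, intervalIntegral.integral_const_mul]
  ring

lemma riemann : Tendsto (fun n : ℕ => (∑ k ∈ Icc 1 n, F ((k:ℝ) / n)) - n * (∫ y in (0:ℝ)..1, F y)
    - (F 1 - F 0)/2) atTop (nhds 0) := by
  have hFc : Continuous F := by
    rw [continuous_iff_continuousAt]; exact fun y => (hF y).continuousAt
  rw [NormedAddCommGroup.tendsto_nhds_zero]
  intro ε hε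
  obtain ⟨δ, hδ, hmod⟩ := Metric.uniformContinuousOn_iff.1
    (isCompact_Icc.uniformContinuousOn_of_continuous
      (s := Set.Icc (0:ℝ) 1) hφ.continuousOn) ε hε
  obtain ⟨N, hN⟩ := exists_nat_one_div_lt hδ
  filter_upwards [eventually_ge_atTop (N+1)] with n hn
  have hn1 : 1 ≤ n := le_trans (Nat.le_add_left 1 N) hn
  have hnpos : 0 < n := hn1
  have hnR : (0:ℝ) < n := Nat.cast_pos.2 hnpos
  have hstep : (1:ℝ)/n < δ := by
    refine lt_of_le_of_lt ?_ hN
    apply one_div_le_one_div_of_le (by positivity)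
    exact_mod_cast hn
  -- rewrite the expression as a single sum
  have h_sum : ∑ k ∈ Icc 1 n, F ((k:ℝ)/n) = ∑ i ∈ range n, F ((i:ℝ)/n + 1/n) := by
    rw [← Finset.Ico_add_one_right_eq_Icc, Finset.sum_Ico_eq_sum_range]
    simp only [Nat.add_sub_cancel, Nat.succ_sub_one]
    refine Finset.sum_congr rfl fun i _ => ?_
    congr 1; push_cast; ring
  have h_int : (∫ y in (0:ℝ)..1, F y)
      = ∑ i ∈ range n, ∫ t in ((i:ℝ)/n)..((i:ℝ)/n + 1/n), F t := by
    have := intervalIntegral.sum_integral_adjacent_intervals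
      (a := fun i : ℕ => (i:ℝ)/n) (μ := volume) (f := F) (n := n)
      (fun k _ => hFc.intervalIntegrable _ _)
    simp only [Nat.cast_zero, zero_div] at this
    rw [div_self hnR.ne'] at this
    rw [← this]
    refine Finset.sum_congr rfl fun i _ => ?_
    congr 1; push_cast; ring
  have h_tel : F 1 - F 0 = ∑ i ∈ range n, (F ((i:ℝ)/n + 1/n) - F ((i:ℝ)/n)) := by
    have := Finset.sum_range_sub (f := fun i : ℕ => F ((i:ℝ)/n)) n
    simp only [Nat.cast_zero, zero_div] at this
    rw [div_self hnR.ne'] at this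
    rw [← this]
    refine Finset.sum_congr rfl fun i _ => ?_
    congr 2; push_cast; ring
  rw [h_sum, h_int, h_tel, Finset.mul_sum, Finset.sum_div, ← Finset.sum_sub_distrib,
    ← Finset.sum_sub_distrib]
  have hkey : ∀ i ∈ range n,
      F ((i:ℝ)/n + 1/n) - n * (∫ t in ((i:ℝ)/n)..((i:ℝ)/n + 1/n), F t)
        - (F ((i:ℝ)/n + 1/n) - F ((i:ℝ)/n))/2
      = ∫ t in ((i:ℝ)/n)..((i:ℝ)/n + 1/n), ((n:ℝ)*(t-(i:ℝ)/n) - 1/2) * (φ t - φ ((i:ℝ)/n)) :=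
    fun i _ => term_eq F φ hF hφ hnpos _
  rw [Finset.sum_congr rfl hkey]
  calc ‖∑ i ∈ range n, ∫ t in ((i:ℝ)/n)..((i:ℝ)/n + 1/n),
          ((n:ℝ)*(t-(i:ℝ)/n) - 1/2) * (φ t - φ ((i:ℝ)/n))‖
      ≤ ∑ i ∈ range n, ‖∫ t in ((i:ℝ)/n)..((i:ℝ)/n + 1/n),
          ((n:ℝ)*(t-(i:ℝ)/n) - 1/2) * (φ t - φ ((i:ℝ)/n))‖ := norm_sum_le _ _
    _ ≤ ∑ i ∈ range n, (1/2 * ε) * |((i:ℝ)/n + 1/n) - (i:ℝ)/n| := by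
        refine Finset.sum_le_sum fun i hi => ?_
        have hiR : (i:ℝ) < n := Nat.cast_lt.2 (Finset.mem_range.1 hi)
        have hiR0 : (0:ℝ) ≤ i := Nat.cast_nonneg i
        refine intervalIntegral.norm_integral_le_of_norm_le_const fun t ht => ?_
        rw [Set.uIoc_of_le (le_add_of_nonneg_right (by positivity))] at ht
        obtain ⟨ht1, ht2⟩ := ht
        have hta : 0 < t - (i:ℝ)/n := sub_pos.2 ht1
        have htb : t - (i:ℝ)/n ≤ 1/n := by linarith
        have hmem_a : (i:ℝ)/n ∈ Set.Icc (0:ℝ) 1 := by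
          constructor
          · positivity
          · rw [div_le_one hnR]; linarith
        have hmem_t : t ∈ Set.Icc (0:ℝ) 1 := by
          constructor
          · have : (0:ℝ) ≤ (i:ℝ)/n := by positivity
            linarith
          · have : (i:ℝ)/n + 1/n ≤ 1 := by
              rw [← add_div, div_le_one hnR]
              have : (i:ℝ) + 1 ≤ n := by exact_mod_cast Finset.mem_range.1 hi
              linarith
            linarith
        have hd : dist t ((i:ℝ)/n) < δ := by
          rw [Real.dist_eq, abs_of_pos hta]; linarith
        have hphi := hmod t hmem_t ((i:ℝ)/n) hmem_a hd
        rw [Real.dist_eq] at hphi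
        rw [Real.norm_eq_abs, abs_mul]
        have h1 : |(n:ℝ)*(t-(i:ℝ)/n) - 1/2| ≤ 1/2 := by
          rw [abs_le]
          constructor
          · nlinarith
          · have : (n:ℝ)*(t-(i:ℝ)/n) ≤ 1 := by
              calc (n:ℝ)*(t-(i:ℝ)/n) ≤ (n:ℝ)*(1/n) := by nlinarith
                _ = 1 := by field_simp
            linarith
        calc |(n:ℝ)*(t-(i:ℝ)/n) - 1/2| * |φ t - φ ((i:ℝ)/n)|
            ≤ (1/2) * ε := by
              apply mul_le_mul h1 hphi.le (abs_nonneg _) (by norm_num)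
          _ = 1/2 * ε := rfl
    _ = n * ((1/2*ε) * (1/n)) := by
        have hcst : ∀ i ∈ range n, (1/2*ε) * |((i:ℝ)/n + 1/n) - (i:ℝ)/n| = (1/2*ε)*(1/n) := by
          intro i _
          rw [add_sub_cancel_left, abs_of_pos (by positivity : (0:ℝ) < 1/(n:ℝ))]
        rw [Finset.sum_congr rfl hcst, Finset.sum_const, Finset.card_range, nsmul_eq_mul]
    _ = ε/2 := by field_simp
    _ < ε := by linarith

end riem



end aux

theorem stmt_10 (β : ℝ) (hβ : β ≠ 0) :
    Tendsto (fun n : ℕ =>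
        Real.log ((∏ k ∈ Icc 1 n, (1 - Real.exp (-β / n) ^ k) / (1 - Real.exp (-β / n)))
            / (Nat.factorial n : ℝ))
          - n * (∫ y in (0:ℝ)..1, Real.log ((1 - Real.exp (-β * y)) / (β * y)))
          - (β / 2 + (1 / 2) * Real.log ((1 - Real.exp (-β)) / β)))
      atTop (nhds 0) := by
  set F : ℝ → ℝ := fun y => Real.log (gg (β * y)) with hFdef
  set φ : ℝ → ℝ := fun y => β * gg' (β * y) / gg (β * y) with hφdef
  have hF : ∀ y, HasDerivAt F (φ y) y := by
    intro y
    have h1 : HasDerivAt (fun y : ℝ => β * y) β y := by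
      simpa using (hasDerivAt_id y).const_mul β
    have h2 : HasDerivAt (fun y => gg (β * y)) (gg' (β * y) * β) y :=
      (hasDerivAt_gg (β * y)).comp y h1
    have h3 := h2.log (gg_pos (β * y)).ne'
    convert h3 using 1
    rw [hφdef]
    ring
  have hφ : Continuous φ := by
    apply Continuous.div
    · exact continuous_const.mul (gg'_cont.comp (continuous_const.mul continuous_id))
    · exact gg_cont.comp (continuous_const.mul continuous_id)
    · exact fun y => (gg_pos _).ne'
  have hF0 : F 0 = 0 := by
    rw [hFdef]; simp [gg_zero]
  have hφ0 : φ 0 = -(β / 2) := by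
    rw [hφdef]; simp [gg_zero, gg'_zero]; ring
  -- limit of n * F (1/n)
  have hslope := hasDerivAt_iff_tendsto_slope.1 (hF 0)
  have hseq : Tendsto (fun n : ℕ => (1:ℝ)/n) atTop (nhdsWithin 0 {(0:ℝ)}ᶜ) := by
    rw [tendsto_nhdsWithin_iff]
    refine ⟨tendsto_one_div_atTop_nhds_zero_nat, ?_⟩
    filter_upwards [eventually_ge_atTop 1] with n hn
    have hn0 : (0:ℝ) < n := by exact_mod_cast hn
    simp only [Set.mem_compl_iff, Set.mem_singleton_iff]
    positivity
  have hD : Tendsto (fun n : ℕ => (n:ℝ) * F (1/n) + β/2) atTop (nhds 0) := by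
    have h1 : Tendsto (fun n : ℕ => slope F 0 ((1:ℝ)/n)) atTop (nhds (φ 0)) :=
      hslope.comp hseq
    have h2 := h1.add_const (β/2)
    rw [hφ0, neg_add_cancel] at h2
    apply h2.congr'
    filter_upwards [eventually_ge_atTop 1] with n hn
    have hn0 : (0:ℝ) < n := by exact_mod_cast hn
    rw [slope_def_field, hF0]
    field_simp
    ring
  have hE := riemann F φ hF hφ
  have htot := hE.sub hD
  rw [sub_zero] at htot
  apply htot.congr'
  filter_upwards [eventually_ge_atTop 1] with n hn
  have hn0 : (0:ℝ) < n := by exact_mod_cast hn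
  have hn0' : (n:ℝ) ≠ 0 := hn0.ne'
  -- the three identifications
  have A_eq : (∫ y in (0:ℝ)..1, Real.log ((1 - Real.exp (-β * y)) / (β * y)))
      = ∫ y in (0:ℝ)..1, F y := by
    apply intervalIntegral.integral_congr
    intro y hy
    by_cases hy0 : y = 0
    · subst hy0
      rw [hFdef]
      simp [gg_zero]
    · have hby : β * y ≠ 0 := mul_ne_zero hβ hy0
      rw [hFdef]
      simp only [neg_mul]
      rw [gg_eq hby]
  have C_eq : Real.log ((1 - Real.exp (-β)) / β) = F 1 := by
    rw [hFdef]
    simp only [mul_one]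
    rw [gg_eq hβ]
  have hfac : ∀ k ∈ Icc 1 n, (1 - Real.exp (-β / n) ^ k) / (1 - Real.exp (-β / n))
      = (k:ℝ) * (gg (β * ((k:ℝ)/n)) / gg (β * ((1:ℝ)/n))) := by
    intro k hk
    obtain ⟨hk1, hkn⟩ := Finset.mem_Icc.1 hk
    have hk0 : (0:ℝ) < k := by exact_mod_cast hk1
    have hxk : β * ((k:ℝ)/n) ≠ 0 := by
      apply mul_ne_zero hβ
      positivity
    have hx1 : β * ((1:ℝ)/n) ≠ 0 := by
      apply mul_ne_zero hβ
      positivity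
    have e1 : (1:ℝ) - Real.exp (-β / n) ^ k = (β * ((k:ℝ)/n)) * gg (β * ((k:ℝ)/n)) := by
      rw [← Real.exp_nat_mul]
      have harg : (k:ℝ) * (-β / n) = -(β * ((k:ℝ)/n)) := by ring
      rw [harg, gg_eq hxk]
      field_simp
    have e2 : (1:ℝ) - Real.exp (-β / n) = (β * ((1:ℝ)/n)) * gg (β * ((1:ℝ)/n)) := by
      have harg : -β / (n:ℝ) = -(β * ((1:ℝ)/n)) := by ring
      rw [harg, gg_eq hx1]
      field_simp
    rw [e1, e2, mul_div_mul_comm]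
    congr 1
    rw [div_eq_iff (mul_ne_zero hβ (by positivity : (1:ℝ)/(n:ℝ) ≠ 0))]
    field_simp
  have hfacpos : ∀ k ∈ Icc 1 n, (0:ℝ) < (1 - Real.exp (-β / n) ^ k) / (1 - Real.exp (-β / n)) := by
    intro k hk
    rw [hfac k hk]
    obtain ⟨hk1, _⟩ := Finset.mem_Icc.1 hk
    have hk0 : (0:ℝ) < k := by exact_mod_cast hk1
    have := gg_pos (β * ((k:ℝ)/n))
    have := gg_pos (β * ((1:ℝ)/n))
    positivity
  have hlogP : Real.log ((∏ k ∈ Icc 1 n, (1 - Real.exp (-β / n) ^ k) / (1 - Real.exp (-β / n)))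
      / (Nat.factorial n : ℝ))
      = (∑ k ∈ Icc 1 n, F ((k:ℝ)/n)) - n * F ((1:ℝ)/n) := by
    have hPpos : (0:ℝ) < ∏ k ∈ Icc 1 n, (1 - Real.exp (-β / n) ^ k) / (1 - Real.exp (-β / n)) :=
      Finset.prod_pos hfacpos
    have hfactpos : (0:ℝ) < (Nat.factorial n : ℝ) := by
      exact_mod_cast Nat.factorial_pos n
    rw [Real.log_div hPpos.ne' hfactpos.ne']
    have hfact_prod : (Nat.factorial n : ℝ) = ∏ k ∈ Icc 1 n, (k:ℝ) := by
      rw [← Nat.cast_prod]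
      congr 1
      rw [← Finset.prod_Ico_id_eq_factorial n, ← Finset.Ico_add_one_right_eq_Icc]
    rw [hfact_prod, Real.log_prod (fun k hk => (hfacpos k hk).ne'),
      Real.log_prod ?_]
    swap
    · intro k hk
      obtain ⟨hk1, _⟩ := Finset.mem_Icc.1 hk
      have : (0:ℝ) < k := by exact_mod_cast hk1
      exact this.ne'
    rw [← Finset.sum_sub_distrib]
    have hterm : ∀ k ∈ Icc 1 n,
        Real.log ((1 - Real.exp (-β / n) ^ k) / (1 - Real.exp (-β / n))) - Real.log (k:ℝ)
        = F ((k:ℝ)/n) - F ((1:ℝ)/n) := by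
      intro k hk
      obtain ⟨hk1, _⟩ := Finset.mem_Icc.1 hk
      have hk0 : (0:ℝ) < k := by exact_mod_cast hk1
      rw [hfac k hk, Real.log_mul hk0.ne'
        (div_pos (gg_pos (β * ((k:ℝ)/n))) (gg_pos (β * ((1:ℝ)/n)))).ne',
        Real.log_div (gg_pos (β * ((k:ℝ)/n))).ne' (gg_pos (β * ((1:ℝ)/n))).ne']
      simp only [hFdef]
      ring
    rw [Finset.sum_congr rfl hterm, Finset.sum_sub_distrib, Finset.sum_const, Nat.card_Icc]
    simp only [Nat.add_sub_cancel, nsmul_eq_mul]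
  rw [hlogP, A_eq, C_eq, hF0]
  ring
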